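/- Let G be a group acting on a set, and let (θ̄(p))_{p ∈ P} be a finite family of nonnegative reals indexed by a finite set P, satisfying a finite homogeneous system of linear equations with integer coefficients: Σ_{p ∈ A_J} θ̄(p) = Σ_{p ∈ B_J} θ̄(p) for finitely many pairs of subsets (A_J, B_J) of P. Then for every ε̂ > 0 there exist M ∈ ℕ and a family (θ(p))_{p ∈ P} of nonnegative integers satisfying the same system of equations, such that |θ(p)/M − θ̄(p)| < ε̂ for all p ∈ P. -/

import Mathlib

open Finset in
private lemma ratSpan {P κ : Type*} [Fintype P] (a : κ → P → ℚ) (T : Finset κ)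
    (x : P → ℝ) (hx : ∀ j ∈ T, ∑ p, (a j p : ℝ) * x p = 0) :
    x ∈ Submodule.span ℝ ((fun q : P → ℚ => fun p => ((q p : ℝ))) ''
      {q : P → ℚ | ∀ j ∈ T, ∑ p, a j p * q p = 0}) := by
  classical
  induction T using Finset.induction_on with
  | empty =>
    have hx2 : x = ∑ p : P, x p • (fun p' : P => (((if p = p' then 1 else 0 : ℚ)) : ℝ)) := by
      funext p'
      simp [Finset.sum_apply, apply_ite (fun r : ℚ => (r : ℝ))]
    rw [hx2]
    refine Submodule.sum_mem _ fun p _ => Submodule.smul_mem _ _ (Submodule.subset_span ?_)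
    exact ⟨fun p' => if p = p' then 1 else 0, by simp, rfl⟩
  | @insert j₀ T hj ih =>
    have hx0 : ∑ p, (a j₀ p : ℝ) * x p = 0 := hx j₀ (mem_insert_self _ _)
    have hxs := ih (fun j hjT => hx j (mem_insert_of_mem hjT))
    by_cases hcase : ∀ q : P → ℚ, (∀ j ∈ T, ∑ p, a j p * q p = 0) →
        ∑ p, a j₀ p * q p = 0
    · refine Submodule.span_mono (Set.image_mono ?_) hxs
      intro q hq j hjmem
      rcases Finset.mem_insert.mp hjmem with h | h
      · subst h; exact hcase q hq
      · exact hq j h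
    · push_neg at hcase
      obtain ⟨s₀, hs₀, hc⟩ := hcase
      set c : ℚ := ∑ p, a j₀ p * s₀ p with hcdef
      let L : (P → ℝ) →ₗ[ℝ] ℝ :=
        { toFun := fun y => ∑ p, (a j₀ p : ℝ) * y p
          map_add' := fun y z => by simp [mul_add, Finset.sum_add_distrib]
          map_smul' := fun r y => by
            simp only [Pi.smul_apply, smul_eq_mul, RingHom.id_apply, Finset.mul_sum]
            exact Finset.sum_congr rfl fun p _ => by ring }
      let π : (P → ℝ) →ₗ[ℝ] (P → ℝ) :=
        LinearMap.id - L.smulRight ((((c : ℝ))⁻¹) • fun p => ((s₀ p : ℝ)))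
      have hπ : ∀ y, π y = y - (∑ p, (a j₀ p : ℝ) * y p) •
          ((((c : ℝ))⁻¹) • fun p => ((s₀ p : ℝ))) := fun y => rfl
      have hπx : π x = x := by rw [hπ, hx0, zero_smul, sub_zero]
      have hmap : ∀ q : P → ℚ, (∀ j ∈ T, ∑ p, a j p * q p = 0) →
          π (fun p => ((q p : ℝ))) ∈ ((fun q : P → ℚ => fun p => ((q p : ℝ))) ''
            {q : P → ℚ | ∀ j ∈ insert j₀ T, ∑ p, a j p * q p = 0}) := by
        intro q hq
        set t : ℚ := (∑ p, a j₀ p * q p) / c with htdef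
        have lin : ∀ (j : κ), ∑ p, a j p * (q p - t * s₀ p)
            = (∑ p, a j p * q p) - t * ∑ p, a j p * s₀ p := by
          intro j
          calc ∑ p, a j p * (q p - t * s₀ p)
              = ∑ p, (a j p * q p - t * (a j p * s₀ p)) :=
                Finset.sum_congr rfl fun p _ => by ring
            _ = (∑ p, a j p * q p) - t * ∑ p, a j p * s₀ p := by
                rw [Finset.sum_sub_distrib, ← Finset.mul_sum]
        refine ⟨fun p => q p - t * s₀ p, ?_, ?_⟩
        · intro j hjmem
          rcases Finset.mem_insert.mp hjmem with h | h
          · subst h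
            rw [lin, htdef, ← hcdef, div_mul_cancel₀ _ hc, sub_self]
          · rw [lin, hq j h, hs₀ j h, mul_zero, sub_zero]
        · funext p
          rw [hπ, htdef]
          simp only [Pi.sub_apply, Pi.smul_apply, smul_eq_mul]
          push_cast
          ring
      have himg : Submodule.map π (Submodule.span ℝ
            ((fun q : P → ℚ => fun p => ((q p : ℝ))) ''
              {q : P → ℚ | ∀ j ∈ T, ∑ p, a j p * q p = 0}))
          ≤ Submodule.span ℝ ((fun q : P → ℚ => fun p => ((q p : ℝ))) ''
              {q : P → ℚ | ∀ j ∈ insert j₀ T, ∑ p, a j p * q p = 0}) := by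
        rw [Submodule.map_span]
        refine Submodule.span_le.mpr ?_
        rintro y ⟨z, ⟨q, hq, rfl⟩, rfl⟩
        exact Submodule.subset_span (hmap q hq)
      exact himg ⟨x, hxs, hπx⟩


open Classical in
private noncomputable def amat {P ι : Type*} (A B : ι → Finset P) (θb : P → ℝ) :
    (ι ⊕ P) → P → ℚ
  | Sum.inl j => fun p => (if p ∈ A j then 1 else 0) - (if p ∈ B j then 1 else 0)
  | Sum.inr p₀ => fun p => if θb p₀ = 0 ∧ p = p₀ then 1 else 0

/-- Rational approximation of nonnegative solutions of a finite homogeneous system of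
linear equations of the form `∑_{p ∈ A j} θ p = ∑_{p ∈ B j} θ p`: any nonnegative real
solution can be approximated by `θ/M` with `θ` a nonnegative-integer solution. -/
theorem stmt17 {P ι : Type*} [Fintype P] [Fintype ι]
    (A B : ι → Finset P) (θb : P → ℝ) (hpos : ∀ p, 0 ≤ θb p)
    (hsys : ∀ j : ι, ∑ p ∈ A j, θb p = ∑ p ∈ B j, θb p) :
    ∀ ε : ℝ, 0 < ε → ∃ (M : ℕ) (θ : P → ℕ), 0 < M ∧
      (∀ j : ι, ∑ p ∈ A j, (θ p : ℝ) = ∑ p ∈ B j, (θ p : ℝ)) ∧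
      ∀ p : P, |(θ p : ℝ) / (M : ℝ) - θb p| < ε := by
  classical
  intro ε hε
  set a : (ι ⊕ P) → P → ℚ := amat A B θb with ha
  -- θb satisfies the real system
  have hθbSol : ∀ k ∈ (Finset.univ : Finset (ι ⊕ P)), ∑ p, ((a k p : ℝ)) * θb p = 0 := by
    rintro (j | p₀) -
    · have key : ∑ p, ((a (Sum.inl j) p : ℝ)) * θb p
          = (∑ p ∈ A j, θb p) - ∑ p ∈ B j, θb p := by
        have h1 : ∀ p, ((a (Sum.inl j) p : ℝ)) * θb p
            = (if p ∈ A j then θb p else 0) - (if p ∈ B j then θb p else 0) := by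
          intro p
          simp only [ha, amat]
          push_cast
          by_cases h1 : p ∈ A j <;> by_cases h2 : p ∈ B j <;> simp [h1, h2]
        rw [Finset.sum_congr rfl fun p _ => h1 p, Finset.sum_sub_distrib]
        congr 1 <;> · rw [Finset.sum_ite_mem, Finset.univ_inter]
      rw [key, hsys j, sub_self]
    · by_cases h0 : θb p₀ = 0
      · have key : ∑ p, ((a (Sum.inr p₀) p : ℝ)) * θb p = θb p₀ := by
          have h1 : ∀ p, ((a (Sum.inr p₀) p : ℝ)) * θb p
              = if p = p₀ then θb p else 0 := by
            intro p
            simp only [ha, amat, h0, true_and]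
            by_cases h : p = p₀ <;> simp [h]
          rw [Finset.sum_congr rfl fun p _ => h1 p, Finset.sum_ite_eq' Finset.univ p₀ θb,
            if_pos (Finset.mem_univ p₀)]
        rw [key, h0]
      · have h1 : ∀ p, ((a (Sum.inr p₀) p : ℝ)) * θb p = 0 := by
          intro p
          simp [ha, amat, h0]
        simp [h1]
  have hspan := ratSpan a Finset.univ θb hθbSol
  rw [Submodule.mem_span_set'] at hspan
  obtain ⟨n, cfin, g, hg⟩ := hspan
  choose q hqSol hqcoe using fun i => (g i).2
  have hθbp : ∀ p, θb p = ∑ i, cfin i * ((q i p : ℝ)) := by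
    intro p
    conv_lhs => rw [← hg]
    rw [Finset.sum_apply]
    refine Finset.sum_congr rfl fun i _ => ?_
    rw [Pi.smul_apply, smul_eq_mul, ← hqcoe i]
  -- choose the target accuracy ε₀
  set F : Finset P := Finset.univ.filter fun p => θb p ≠ 0 with hF
  set ε₀ : ℝ := if hFne : F.Nonempty then min ε (F.inf' hFne θb) else ε with hε₀
  have hε₀pos : 0 < ε₀ := by
    by_cases hFne : F.Nonempty
    · rw [hε₀, dif_pos hFne]
      refine lt_min hε ?_
      rw [Finset.lt_inf'_iff]
      intro p hp
      exact lt_of_le_of_ne (hpos p) (Ne.symm ((Finset.mem_filter.mp hp).2))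
    · rw [hε₀, dif_neg hFne]; exact hε
  have hε₀ε : ε₀ ≤ ε := by
    by_cases hFne : F.Nonempty
    · rw [hε₀, dif_pos hFne]; exact min_le_left _ _
    · rw [hε₀, dif_neg hFne]
  have hε₀θ : ∀ p, θb p ≠ 0 → ε₀ ≤ θb p := by
    intro p hp
    have hFne : F.Nonempty := ⟨p, by simp [hF, hp]⟩
    rw [hε₀, dif_pos hFne]
    exact le_trans (min_le_right _ _) (Finset.inf'_le _ (by simp [hF, hp]))
  -- approximation of the coefficients
  set C : ℝ := ∑ i, ∑ p, |((q i p : ℝ))| with hC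
  have hCnn : 0 ≤ C :=
    Finset.sum_nonneg fun i _ => Finset.sum_nonneg fun p _ => abs_nonneg _
  set δ : ℝ := ε₀ / (2 * (C + 1)) with hδdef
  have hδpos : 0 < δ := by positivity
  have hrex : ∀ i : Fin n, ∃ r : ℚ, cfin i < (r : ℝ) ∧ (r : ℝ) < cfin i + δ :=
    fun i => exists_rat_btwn (by linarith)
  choose r hr1 hr2 using hrex
  set qh : P → ℚ := fun p => ∑ i, r i * q i p with hqh
  have hqhcast : ∀ p, ((qh p : ℝ)) = ∑ i, (r i : ℝ) * ((q i p : ℝ)) := by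
    intro p; rw [hqh]; push_cast; rfl
  have herr : ∀ p, |(qh p : ℝ) - θb p| ≤ ε₀ / 2 := by
    intro p
    rw [hqhcast p, hθbp p, ← Finset.sum_sub_distrib]
    calc |∑ i, ((r i : ℝ) * ((q i p : ℝ)) - cfin i * ((q i p : ℝ)))|
        ≤ ∑ i, |(r i : ℝ) * ((q i p : ℝ)) - cfin i * ((q i p : ℝ))| :=
          Finset.abs_sum_le_sum_abs _ _
      _ = ∑ i, |(r i : ℝ) - cfin i| * |((q i p : ℝ))| := by
          refine Finset.sum_congr rfl fun i _ => ?_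
          rw [← sub_mul, abs_mul]
      _ ≤ ∑ i, δ * |((q i p : ℝ))| := by
          refine Finset.sum_le_sum fun i _ => ?_
          refine mul_le_mul_of_nonneg_right ?_ (abs_nonneg _)
          rw [abs_of_pos (by linarith [hr1 i])]
          linarith [hr2 i]
      _ ≤ ∑ i, δ * (∑ p', |((q i p' : ℝ))|) := by
          refine Finset.sum_le_sum fun i _ => ?_
          exact mul_le_mul_of_nonneg_left
            (Finset.single_le_sum (f := fun p' => |((q i p' : ℝ))|)
              (fun _ _ => abs_nonneg _) (Finset.mem_univ p)) hδpos.le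
      _ = δ * C := by rw [← Finset.mul_sum, hC]
      _ ≤ ε₀ / 2 := by
          have h1 : δ * C ≤ δ * (C + 1) := by nlinarith
          have h2 : δ * (C + 1) = ε₀ / 2 := by
            rw [hδdef]; field_simp
          linarith
  -- qh solves the system
  have hqhSol : ∀ k : ι ⊕ P, ∑ p, a k p * qh p = 0 := by
    intro k
    have key : ∑ p, a k p * qh p = ∑ i, r i * ∑ p, a k p * q i p := by
      calc ∑ p, a k p * qh p = ∑ p, ∑ i, r i * (a k p * q i p) := by
            refine Finset.sum_congr rfl fun p _ => ?_
            rw [hqh, Finset.mul_sum]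
            exact Finset.sum_congr rfl fun i _ => by ring
        _ = ∑ i, ∑ p, r i * (a k p * q i p) := Finset.sum_comm
        _ = ∑ i, r i * ∑ p, a k p * q i p := by
            refine Finset.sum_congr rfl fun i _ => ?_
            rw [Finset.mul_sum]
    rw [key]
    exact Finset.sum_eq_zero fun i _ => by
      rw [hqSol i k (Finset.mem_univ k), mul_zero]
  -- qh vanishes where θb does, and is nonnegative
  have hqhzero : ∀ p, θb p = 0 → qh p = 0 := by
    intro p hp
    have hqi : ∀ i, q i p = 0 := by
      intro i
      have h := hqSol i (Sum.inr p) (Finset.mem_univ _)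
      have h1 : ∀ p', a (Sum.inr p) p' * q i p' = if p' = p then q i p' else 0 := by
        intro p'
        simp only [ha, amat, hp, true_and]
        by_cases h2 : p' = p <;> simp [h2]
      rw [Finset.sum_congr rfl fun p' _ => h1 p',
        Finset.sum_ite_eq' Finset.univ p (q i), if_pos (Finset.mem_univ p)] at h
      exact h
    rw [hqh]
    exact Finset.sum_eq_zero fun i _ => by rw [hqi i, mul_zero]
  have hqhnn : ∀ p, 0 ≤ qh p := by
    intro p
    by_cases hp : θb p = 0
    · rw [hqhzero p hp]
    · have h1 : ε₀ ≤ θb p := hε₀θ p hp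
      have h2 := (abs_le.mp (herr p)).1
      have : (0 : ℝ) ≤ ((qh p : ℝ)) := by linarith
      exact_mod_cast this
  -- clear denominators
  set d : ℕ := ∏ p, (qh p).den with hd
  have hdpos : 0 < d := Finset.prod_pos fun p _ => (qh p).pos
  set θ : P → ℕ := fun p => (qh p).num.toNat * (d / (qh p).den) with hθ
  have hθcast : ∀ p, ((θ p : ℚ)) = qh p * d := by
    intro p
    have hdvd : (qh p).den ∣ d := Finset.dvd_prod_of_mem _ (Finset.mem_univ p)
    have hnum : (0 : ℤ) ≤ (qh p).num := Rat.num_nonneg.mpr (hqhnn p)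
    have h1 : ((θ p : ℚ)) = ((qh p).num : ℚ) * ((d : ℚ) / (((qh p).den : ℕ) : ℚ)) := by
      rw [hθ]
      push_cast [Nat.cast_div hdvd (by exact_mod_cast (qh p).den_nz : (((qh p).den : ℕ) : ℚ) ≠ 0)]
      congr 1
      exact_mod_cast Int.toNat_of_nonneg hnum
    rw [h1]
    conv_rhs => rw [← Rat.num_div_den (qh p)]
    ring
  have hθR : ∀ p, ((θ p : ℝ)) = ((qh p : ℝ)) * d := by
    intro p; exact_mod_cast hθcast p
  refine ⟨d, θ, hdpos, ?_, ?_⟩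
  · intro j
    have h := hqhSol (Sum.inl j)
    have key : ∑ p, a (Sum.inl j) p * qh p
        = (∑ p ∈ A j, qh p) - ∑ p ∈ B j, qh p := by
      have h1 : ∀ p, a (Sum.inl j) p * qh p
          = (if p ∈ A j then qh p else 0) - (if p ∈ B j then qh p else 0) := by
        intro p
        simp only [ha, amat]
        by_cases h1 : p ∈ A j <;> by_cases h2 : p ∈ B j <;> simp [h1, h2]
      rw [Finset.sum_congr rfl fun p _ => h1 p, Finset.sum_sub_distrib]
      congr 1 <;> · rw [Finset.sum_ite_mem, Finset.univ_inter]
    rw [key] at h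
    have hA : ∑ p ∈ A j, qh p = ∑ p ∈ B j, qh p := by linarith
    have hQ : ∑ p ∈ A j, ((θ p : ℚ)) = ∑ p ∈ B j, ((θ p : ℚ)) := by
      simp only [hθcast, ← Finset.sum_mul, hA]
    exact_mod_cast hQ
  · intro p
    have hdiv : ((θ p : ℝ)) / (d : ℝ) = ((qh p : ℝ)) := by
      rw [hθR p]
      field_simp
    rw [hdiv]
    exact lt_of_le_of_lt (herr p) (by linarith)
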